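/- Let X be a compact geodesic metric space, let A be an abelian group, and let φ be a homomorphism from the fundamental group of X to A (equivalently, a degree-1 cohomology class ξ of X with coefficients in A). Let L(φ) be the infimum of lengths of rectifiable loops in X on which φ evaluates non-trivially. If r < L(φ)/2, then φ evaluates trivially on every rectifiable loop contained in a metric ball of radius r; that is, ξ restricts trivially to every metric ball of radius r. -/

import Mathlib

open scoped ENNReal
attribute [local instance] Path.Homotopic.setoid

/-- The length of a path in a metric space: its total variation. -/
noncomputable def pathLength {X : Type} [MetricSpace X] {x y : X} (γ : Path x y) : ℝ≥0∞ :=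
  eVariationOn (fun t => γ t) Set.univ

/-- The value of a homomorphism `φ : π₁(X, x₀) → A` (`A` abelian) on a loop `γ` based at
an arbitrary point `y`, computed by conjugating with a path `p` from `x₀` to `y`; since
`A` is abelian it does not depend on the choice of `p`. -/
noncomputable def evalLoop {X : Type} [TopologicalSpace X] {A : Type} [CommGroup A]
    {x₀ y : X} (φ : FundamentalGroup X x₀ →* A) (p : Path x₀ y) (γ : Path y y) : A :=
  φ (FundamentalGroup.fromPath (X := TopCat.of X) ⟦(p.trans γ).trans p.symm⟧)

open Set CategoryTheory

namespace SmallBallAux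

/-! ### Algebraic layer: evaluating loops through the fundamental groupoid -/

section Algebra
variable {X : Type} [TopologicalSpace X] {A : Type} [CommGroup A] {x₀ : X}
  (φ : FundamentalGroup X x₀ →* A)

local notation "gmk" a => FundamentalGroupoid.mk (X := TopCat.of X) a

/-- evaluation of a loop (as an arrow) at `m`, conjugated back via `a`. -/
noncomputable def theta {m : FundamentalGroupoid (TopCat.of X)}
    (a : (gmk x₀) ⟶ m) (l : m ⟶ m) : A :=
  φ (FundamentalGroup.fromArrow (X := TopCat.of X) ((a ≫ l) ≫ Groupoid.inv a))

lemma psi_comp (f g : (gmk x₀) ⟶ (gmk x₀)) :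
    φ (FundamentalGroup.fromArrow (X := TopCat.of X) (f ≫ g)) =
    φ (FundamentalGroup.fromArrow (X := TopCat.of X) f) *
    φ (FundamentalGroup.fromArrow (X := TopCat.of X) g) := by
  rw [show FundamentalGroup.fromArrow (X := TopCat.of X) (f ≫ g) =
      FundamentalGroup.fromArrow g * FundamentalGroup.fromArrow f from rfl,
    map_mul, mul_comm]

lemma psi_inv (f : (gmk x₀) ⟶ (gmk x₀)) :
    φ (FundamentalGroup.fromArrow (X := TopCat.of X) (Groupoid.inv f)) =
    (φ (FundamentalGroup.fromArrow (X := TopCat.of X) f))⁻¹ := by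
  rw [show FundamentalGroup.fromArrow (X := TopCat.of X) (Groupoid.inv f) =
      (FundamentalGroup.fromArrow f)⁻¹ from rfl, map_inv]

lemma theta_comp {m} (a : (gmk x₀) ⟶ m) (l l' : m ⟶ m) :
    theta φ a (l ≫ l') = theta φ a l * theta φ a l' := by
  unfold theta
  rw [show ((a ≫ l ≫ l') ≫ Groupoid.inv a) =
      ((a ≫ l) ≫ Groupoid.inv a) ≫ ((a ≫ l') ≫ Groupoid.inv a) by
    simp [Groupoid.inv_eq_inv], psi_comp]

lemma theta_conj {m m'} (a : (gmk x₀) ⟶ m) (h : m ⟶ m') (l : m' ⟶ m') :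
    theta φ a ((h ≫ l) ≫ Groupoid.inv h) = theta φ (a ≫ h) l := by
  unfold theta
  congr 1
  apply congrArg
  simp [Groupoid.inv_eq_inv]

lemma theta_indep {m} (a b : (gmk x₀) ⟶ m) (l : m ⟶ m) :
    theta φ a l = theta φ b l := by
  have key : ((a ≫ l) ≫ Groupoid.inv a) =
      ((a ≫ Groupoid.inv b) ≫ (((b ≫ l) ≫ Groupoid.inv b) ≫
        Groupoid.inv (a ≫ Groupoid.inv b))) := by
    simp [Groupoid.inv_eq_inv]
  unfold theta
  rw [key, psi_comp, psi_comp, psi_inv, mul_comm, mul_assoc]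
  simp

lemma evalLoop_eq_theta {y : X} (p : Path x₀ y) (γ : Path y y) :
    evalLoop φ p γ = theta φ (FundamentalGroupoid.fromPath (X := TopCat.of X) ⟦p⟧)
      (FundamentalGroupoid.fromPath ⟦γ⟧) := rfl

lemma evalLoop_congr {y : X} (p : Path x₀ y) {γ γ' : Path y y}
    (h : Path.Homotopic γ γ') : evalLoop φ p γ = evalLoop φ p γ' := by
  rw [evalLoop_eq_theta, evalLoop_eq_theta,
    show (⟦γ⟧ : Path.Homotopic.Quotient y y) = ⟦γ'⟧ from Quotient.sound h]

end Algebra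

/-! ### Metric layer: lengths of paths -/

section Metric
variable {X : Type} [MetricSpace X]

lemma pathLength_eq_extend {x y : X} (γ : Path x y) :
    pathLength γ = eVariationOn γ.extend (Icc 0 1) := by
  have key := eVariationOn.comp_eq_of_monotoneOn (fun t : unitInterval => γ t)
    (projIcc (0:ℝ) 1 zero_le_one) (t := Icc 0 1) ((monotone_projIcc _).monotoneOn _)
  have him : projIcc (0:ℝ) 1 zero_le_one '' Icc 0 1 = univ := by
    apply Subset.antisymm (subset_univ _)
    intro t _
    exact ⟨(t : ℝ), t.2, projIcc_val zero_le_one t⟩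
  rw [him] at key
  rw [pathLength, ← key]
  exact eVariationOn.eq_of_eqOn (fun t _ => rfl)

lemma pathLength_cast {x y x' y' : X} (γ : Path x y) (hx : x' = x) (hy : y' = y) :
    pathLength (γ.cast hx hy) = pathLength γ := by
  unfold pathLength
  apply eVariationOn.eq_of_eqOn
  intro t _
  simp [Path.cast_coe]

lemma pathLength_truncateOfLE {x y : X} (γ : Path x y) {a b : ℝ} (h0 : 0 ≤ a) (hab : a ≤ b)
    (hb1 : b ≤ 1) :
    pathLength (γ.truncateOfLE hab) = eVariationOn γ.extend (Icc a b) := by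
  have h1 : (fun t : unitInterval => (γ.truncateOfLE hab) t)
      = γ.extend ∘ (fun t : unitInterval => min (max (t : ℝ) a) b) := by
    funext t
    rfl
  rw [pathLength, h1, eVariationOn.comp_eq_of_monotoneOn]
  · congr 1
    apply Subset.antisymm
    · rintro _ ⟨t, -, rfl⟩
      exact ⟨le_min (le_max_right _ _) hab, min_le_right _ _⟩
    · rintro c ⟨hac, hcb⟩
      refine ⟨⟨c, h0.trans hac, hcb.trans hb1⟩, mem_univ _, ?_⟩
      simp only []
      rw [max_eq_left hac, min_eq_left hcb]
  · intro s _ t _ hst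
    exact min_le_min (max_le_max (Subtype.coe_le_coe.mpr hst) le_rfl) le_rfl

lemma pathLength_symm {x y : X} (γ : Path x y) : pathLength γ.symm = pathLength γ := by
  have h1 : (fun t : unitInterval => γ.symm t)
      = (fun t : unitInterval => γ t) ∘ unitInterval.symm := rfl
  rw [pathLength, h1, eVariationOn.comp_eq_of_antitoneOn]
  · rw [image_univ, unitInterval.symm_bijective.surjective.range_eq, pathLength]
  · intro s _ t _ hst
    have : (s:ℝ) ≤ t := hst
    simp only [← Subtype.coe_le_coe, unitInterval.coe_symm_eq]
    linarith

lemma extend_trans_left {x y z : X} (γ : Path x y) (γ' : Path y z) {t : ℝ}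
    (h0 : 0 ≤ t) (h : t ≤ 1/2) : (γ.trans γ').extend t = γ.extend (2*t) := by
  rw [Path.extend_apply _ ⟨h0, h.trans (by norm_num)⟩, Path.trans_apply]
  simp only [h, dif_pos]
  rw [← Path.extend_apply]

lemma extend_trans_right {x y z : X} (γ : Path x y) (γ' : Path y z) {t : ℝ}
    (h : 1/2 ≤ t) (h1 : t ≤ 1) : (γ.trans γ').extend t = γ'.extend (2*t - 1) := by
  rw [Path.extend_apply _ ⟨by linarith, h1⟩, Path.trans_apply]
  split_ifs with hc
  · have ht : t = 1/2 := le_antisymm hc h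
    subst ht
    norm_num
  · rw [← Path.extend_apply]

lemma pathLength_trans {x y z : X} (γ : Path x y) (γ' : Path y z) :
    pathLength (γ.trans γ') = pathLength γ + pathLength γ' := by
  rw [pathLength_eq_extend]
  have key := eVariationOn.Icc_add_Icc (γ.trans γ').extend (s := univ)
    (by norm_num : (0:ℝ) ≤ 1/2) (by norm_num : (1:ℝ)/2 ≤ 1) (mem_univ _)
  simp only [univ_inter] at key
  rw [← key]
  congr 1
  · have h1 : EqOn (γ.trans γ').extend (γ.extend ∘ (fun t => 2*t + 0)) (Icc 0 (1/2)) := by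
      intro t ht
      simp only [Function.comp_apply, add_zero]
      exact extend_trans_left γ γ' ht.1 ht.2
    rw [eVariationOn.eq_of_eqOn h1,
      eVariationOn.comp_eq_of_monotoneOn _ _
        (fun s _ t _ hst => add_le_add_left (mul_le_mul_of_nonneg_left hst (by norm_num)) _),
      image_affine_Icc' (by norm_num : (0:ℝ) < 2) 0 0 (1/2), pathLength_eq_extend]
    norm_num
  · have h1 : EqOn (γ.trans γ').extend (γ'.extend ∘ (fun t => 2*t + (-1))) (Icc (1/2) 1) := by
      intro t ht
      simp only [Function.comp_apply]
      rw [show 2*t + (-1) = 2*t - 1 by ring]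
      exact extend_trans_right γ γ' ht.1 ht.2
    rw [eVariationOn.eq_of_eqOn h1,
      eVariationOn.comp_eq_of_monotoneOn _ _
        (fun s _ t _ hst => add_le_add_left (mul_le_mul_of_nonneg_left hst (by norm_num)) _),
      image_affine_Icc' (by norm_num : (0:ℝ) < 2) (-1) (1/2) 1, pathLength_eq_extend]
    norm_num

/-! ### Continuity of the variation and splitting -/

/-- Right-continuity of variation at the left endpoint, for a continuous map. -/
lemma rcont {f : ℝ → X} (hf : Continuous f) {a b : ℝ} (hab : a < b)
    (hfin : eVariationOn f (Icc a b) ≠ ⊤) {ε : ℝ≥0∞} (hε : 0 < ε) :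
    ∃ c, a < c ∧ c ≤ b ∧ eVariationOn f (Icc a c) ≤ ε := by
  by_cases hVε : eVariationOn f (Icc a b) ≤ ε
  · exact ⟨b, hab, le_rfl, hVε⟩
  push_neg at hVε
  have hεtop : ε ≠ ⊤ := fun h => hfin (top_le_iff.mp (h ▸ hVε.le))
  set V := eVariationOn f (Icc a b) with hV
  set η := ε / 2 with hηdef
  have hη0 : η ≠ 0 := (ENNReal.half_pos hε.ne').ne'
  have hηtop : η ≠ ⊤ := by
    simp only [hηdef, ne_eq, ENNReal.div_eq_top]
    simp [hεtop]
  have hηε : η ≤ ε := ENNReal.half_le_self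
  -- pick a good partition
  have hlt : V - η < V :=
    ENNReal.sub_lt_self hfin (fun h => (hε.trans hVε).ne' (by simp [h])) hη0
  obtain ⟨⟨n, u, hu, us⟩, hsum⟩ := lt_iSup_iff.mp
    (show V - η < ⨆ p : ℕ × { u : ℕ → ℝ // Monotone u ∧ ∀ i, u i ∈ Icc a b },
      ∑ i ∈ Finset.range p.1, edist (f (p.2.1 (i + 1))) (f (p.2.1 i)) from hlt)
  -- prepend the point `a`
  set u' : ℕ → ℝ := fun i => match i with | 0 => a | (j+1) => u j with hu'def
  have hu' : Monotone u' := by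
    apply monotone_nat_of_le_succ
    intro i
    match i with
    | 0 => exact (us 0).1
    | (j+1) => exact hu (Nat.le_succ j)
  have us' : ∀ i, u' i ∈ Icc a b := by
    intro i
    match i with
    | 0 => exact ⟨le_rfl, hab.le⟩
    | (j+1) => exact us j
  set n' := n + 1 with hn'def
  have hsum' : V - η < ∑ i ∈ Finset.range n', edist (f (u' (i + 1))) (f (u' i)) := by
    rw [hn'def, Finset.sum_range_succ']
    exact hsum.trans_le (le_add_right le_rfl)
  have hu'0 : u' 0 = a := rfl
  -- first index where the partition leaves `a`
  have hex : ∃ i, i ≤ n' ∧ a < u' i := by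
    by_contra hcon
    push_neg at hcon
    have : ∑ i ∈ Finset.range n', edist (f (u' (i + 1))) (f (u' i)) = 0 := by
      apply Finset.sum_eq_zero
      intro i hi
      rw [Finset.mem_range] at hi
      have h1 : u' i = a := le_antisymm (hcon i (by omega)) (us' i).1
      have h2 : u' (i+1) = a := le_antisymm (hcon (i+1) (by omega)) (us' (i+1)).1
      rw [h1, h2, edist_self]
    rw [this] at hsum'
    exact (not_lt.mpr zero_le) hsum'
  set k := Nat.find hex with hkdef
  have hkn : k ≤ n' := (Nat.find_spec hex).1
  have hka : a < u' k := (Nat.find_spec hex).2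
  have hkmin : ∀ i, i < k → i ≤ n' → u' i = a := by
    intro i hik hin
    have := Nat.find_min hex hik
    push_neg at this
    exact le_antisymm (this hin) (us' i).1
  have hk0 : k ≠ 0 := by
    intro h
    rw [h, hu'0] at hka
    exact lt_irrefl a hka
  -- continuity at `a`
  have hηR : (0:ℝ) < η.toReal := ENNReal.toReal_pos hη0 hηtop
  obtain ⟨d, hd0, hd⟩ := Metric.continuousAt_iff.mp hf.continuousAt η.toReal hηR
  set c := min (u' k) (a + d / 2) with hcdef
  have hac : a < c := lt_min hka (by linarith)
  have hcb : c ≤ b := (min_le_left _ _).trans (us' k).2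
  have hcuk : c ≤ u' k := min_le_left _ _
  have hE : edist (f a) (f c) < η := by
    rw [edist_comm, edist_dist, ← ENNReal.ofReal_toReal hηtop]
    apply ENNReal.ofReal_lt_ofReal_iff_of_nonneg dist_nonneg |>.mpr
    apply hd
    rw [Real.dist_eq, abs_of_pos (by linarith)]
    have : c ≤ a + d / 2 := min_le_right _ _
    linarith
  -- modified partition
  set w : ℕ → ℝ := fun i => max (u' i) c with hwdef
  have hwmono : Monotone w := fun i j hij => max_le_max (hu' hij) le_rfl
  have hws : ∀ i, w i ∈ Icc c b := fun i => ⟨le_max_right _ _, max_le (us' i).2 hcb⟩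
  have hcomp : ∀ i ∈ Finset.range n', edist (f (u' (i + 1))) (f (u' i)) ≤
      edist (f (w (i + 1))) (f (w i)) + (if i + 1 = k then edist (f a) (f c) else 0) := by
    intro i hi
    rw [Finset.mem_range] at hi
    by_cases h1 : a < u' (i+1)
    · have hik : k ≤ i + 1 := by
        by_contra hcon
        push_neg at hcon
        rw [hkmin (i+1) hcon (by omega)] at h1
        exact lt_irrefl a h1
      have hw1 : w (i+1) = u' (i+1) := max_eq_left (hcuk.trans (hu' hik))
      by_cases h2 : i + 1 = k
      · have hui : u' i = a := hkmin i (by omega) (by omega)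
        have hwi : w i = c := by
          rw [hwdef]
          simp only []
          rw [hui, max_eq_right hac.le]
        rw [hw1, hwi, hui, if_pos h2]
        calc edist (f (u' (i+1))) (f a) ≤ edist (f (u' (i+1))) (f c) + edist (f c) (f a) :=
              edist_triangle _ _ _
          _ = edist (f (u' (i+1))) (f c) + edist (f a) (f c) := by rw [edist_comm (f c)]
      · have hki : k ≤ i := by omega
        have hwi : w i = u' i := max_eq_left (hcuk.trans (hu' hki))
        rw [hw1, hwi, if_neg h2, add_zero]
    · have h1' : u' (i+1) = a := le_antisymm (not_lt.mp h1) (us' (i+1)).1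
      have h0' : u' i = a := le_antisymm (h1' ▸ hu' (Nat.le_succ i)) (us' i).1
      rw [h1', h0', edist_self]
      exact zero_le
  have hsum2 : ∑ i ∈ Finset.range n', edist (f (u' (i + 1))) (f (u' i)) ≤
      eVariationOn f (Icc c b) + η := by
    calc ∑ i ∈ Finset.range n', edist (f (u' (i + 1))) (f (u' i))
        ≤ ∑ i ∈ Finset.range n', (edist (f (w (i + 1))) (f (w i)) +
            (if i + 1 = k then edist (f a) (f c) else 0)) := Finset.sum_le_sum hcomp
      _ = (∑ i ∈ Finset.range n', edist (f (w (i + 1))) (f (w i))) +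
            ∑ i ∈ Finset.range n', (if i + 1 = k then edist (f a) (f c) else 0) := by
          rw [Finset.sum_add_distrib]
      _ ≤ eVariationOn f (Icc c b) + η := by
          apply add_le_add (eVariationOn.sum_le (f := f) (n := n') hwmono hws)
          have : ∀ i, (i + 1 = k) ↔ (i = k - 1) := fun i => by omega
          simp only [this]
          rw [Finset.sum_ite_eq' (Finset.range n') (k-1) (fun _ => edist (f a) (f c))]
          split_ifs
          · exact hE.le
          · exact zero_le
  -- conclude
  have hVsplit : eVariationOn f (Icc a c) + eVariationOn f (Icc c b) = V := by
    have h := eVariationOn.Icc_add_Icc f (s := univ) hac.le hcb (mem_univ c)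
    simpa only [univ_inter] using h
  have hfin2 : eVariationOn f (Icc c b) ≠ ⊤ := by
    intro h
    apply hfin
    rw [← hVsplit, h, add_top]
  have hlt2 : V < eVariationOn f (Icc c b) + η + η :=
    (ENNReal.sub_lt_iff_lt_right hηtop (hηε.trans hVε.le)).mp (hsum'.trans_le hsum2)
  have : eVariationOn f (Icc a c) < η + η := by
    rw [← hVsplit, add_comm (eVariationOn f (Icc a c)), add_assoc] at hlt2
    exact (ENNReal.add_lt_add_iff_left hfin2).mp hlt2
  refine ⟨c, hac, hcb, ?_⟩
  rw [ENNReal.add_halves] at this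
  exact this.le

/-- Left-continuity of variation at the right endpoint. -/
lemma lcont {f : ℝ → X} (hf : Continuous f) {a b : ℝ} (hab : a < b)
    (hfin : eVariationOn f (Icc a b) ≠ ⊤) {ε : ℝ≥0∞} (hε : 0 < ε) :
    ∃ c, a ≤ c ∧ c < b ∧ eVariationOn f (Icc c b) ≤ ε := by
  have hrefl : ∀ u v : ℝ, eVariationOn (f ∘ Neg.neg) (Icc (-v) (-u)) =
      eVariationOn f (Icc u v) := by
    intro u v
    rw [eVariationOn.comp_eq_of_antitoneOn f Neg.neg (fun s _ t _ hst => neg_le_neg hst)]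
    congr 1
    rw [Set.image_neg_eq_neg, Set.neg_Icc]
    simp
  obtain ⟨c', h1, h2, h3⟩ := rcont (hf.comp continuous_neg) (neg_lt_neg hab)
    (by rw [hrefl]; exact hfin) hε
  refine ⟨-c', ?_, ?_, ?_⟩
  · linarith
  · linarith
  · have := hrefl (-c') b
    rw [neg_neg] at this
    rw [← this]
    exact h3

/-- Splitting a path of finite variation into a small initial piece and a controlled tail. -/
lemma split {f : ℝ → X} (hf : Continuous f) {δ₁ δ₂ : ℝ≥0∞} (hδ₁ : δ₁ ≠ ⊤)
    (hfin : eVariationOn f (Icc 0 1) ≠ ⊤)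
    (htot : eVariationOn f (Icc 0 1) ≤ δ₁ + δ₂) :
    ∃ s, 0 ≤ s ∧ s ≤ 1 ∧ eVariationOn f (Icc 0 s) ≤ δ₁ ∧ eVariationOn f (Icc s 1) ≤ δ₂ := by
  have hadd : ∀ t : ℝ, 0 ≤ t → t ≤ 1 →
      eVariationOn f (Icc 0 t) + eVariationOn f (Icc t 1) = eVariationOn f (Icc 0 1) := by
    intro t h0 h1
    have h := eVariationOn.Icc_add_Icc f (s := univ) h0 h1 (mem_univ t)
    simpa only [univ_inter] using h
  have hmono : ∀ t₁ t₂ : ℝ, Icc t₁ t₂ ⊆ Icc 0 1 → eVariationOn f (Icc t₁ t₂) ≠ ⊤ :=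
    fun t₁ t₂ h => fun htop => hfin (top_le_iff.mp (htop ▸ eVariationOn.mono f h))
  set S := {t : ℝ | t ∈ Icc (0:ℝ) 1 ∧ δ₁ ≤ eVariationOn f (Icc 0 t)} with hSdef
  by_cases hS : S.Nonempty
  · set s := sInf S with hsdef
    have hbdd : BddBelow S := ⟨0, fun t ht => ht.1.1⟩
    have hS' := hS
    obtain ⟨t₀, ht₀⟩ := hS'
    have hs0 : 0 ≤ s := le_csInf hS (fun t ht => ht.1.1)
    have hs1 : s ≤ 1 := (csInf_le hbdd ht₀).trans ht₀.1.2
    have cancel : ∀ t : ℝ, t ∈ Icc (0:ℝ) 1 → δ₁ ≤ eVariationOn f (Icc 0 t) →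
        eVariationOn f (Icc t 1) ≤ δ₂ := by
      intro t ht hδt
      by_cases hδ₂ : δ₂ = ⊤
      · simp [hδ₂]
      have h := hadd t ht.1 ht.2
      have h2 : δ₁ + eVariationOn f (Icc t 1) ≤ δ₁ + δ₂ :=
        le_trans (add_le_add_left hδt _) (h.le.trans htot)
      exact (ENNReal.add_le_add_iff_left hδ₁).mp h2
    have claimA : eVariationOn f (Icc 0 s) ≤ δ₁ := by
      rcases eq_or_lt_of_le hs0 with h | h
      · rw [← h, Icc_self]
        simp
      · apply ENNReal.le_of_forall_pos_le_add
        intro εn hεn _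
        obtain ⟨c, hc0, hcs, hvar⟩ := lcont hf h
          (hmono 0 s (Icc_subset_Icc le_rfl hs1)) (ENNReal.coe_pos.mpr hεn)
        have hcS : c ∉ S := fun hc => (not_lt.mpr (csInf_le hbdd hc)) hcs
        have hVc : eVariationOn f (Icc 0 c) ≤ δ₁ := by
          by_contra hcon
          exact hcS ⟨⟨hc0, hcs.le.trans hs1⟩, (not_le.mp hcon).le⟩
        have hsplit : eVariationOn f (Icc 0 c) + eVariationOn f (Icc c s) =
            eVariationOn f (Icc 0 s) := by
          have h := eVariationOn.Icc_add_Icc f (s := univ) hc0 hcs.le (mem_univ c)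
          simpa only [univ_inter] using h
        rw [← hsplit]
        exact add_le_add hVc hvar
    have claimB : eVariationOn f (Icc s 1) ≤ δ₂ := by
      by_cases hδ₂ : δ₂ = ⊤
      · simp [hδ₂]
      by_cases hsS : δ₁ ≤ eVariationOn f (Icc 0 s)
      · exact cancel s ⟨hs0, hs1⟩ hsS
      · have hslt : s < 1 := by
          rcases eq_or_lt_of_le hs1 with h | h
          · exfalso
            have ht₀1 : t₀ = 1 := le_antisymm ht₀.1.2 (h ▸ csInf_le hbdd ht₀)
            exact hsS (h ▸ (ht₀1 ▸ ht₀.2))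
          · exact h
        apply ENNReal.le_of_forall_pos_le_add
        intro εn hεn _
        obtain ⟨c, hsc, hc1, hvar⟩ := rcont hf hslt
          (hmono s 1 (Icc_subset_Icc hs0 le_rfl)) (ENNReal.coe_pos.mpr hεn)
        obtain ⟨t, htS, htc⟩ := exists_lt_of_csInf_lt hS hsc
        have h1 : eVariationOn f (Icc t 1) ≤ δ₂ := cancel t htS.1 htS.2
        have h2 : eVariationOn f (Icc s t) ≤ εn :=
          (eVariationOn.mono f (Icc_subset_Icc le_rfl htc.le)).trans hvar
        have hst : s ≤ t := csInf_le hbdd htS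
        have hsplit : eVariationOn f (Icc s t) + eVariationOn f (Icc t 1) =
            eVariationOn f (Icc s 1) := by
          have h := eVariationOn.Icc_add_Icc f (s := univ) hst htS.1.2 (mem_univ t)
          simpa only [univ_inter] using h
        rw [← hsplit, add_comm]
        exact add_le_add h1 h2
    exact ⟨s, hs0, hs1, claimA, claimB⟩
  · refine ⟨1, zero_le_one, le_rfl, ?_, ?_⟩
    · by_contra hcon
      exact hS ⟨1, ⟨zero_le_one, le_rfl⟩, (not_le.mp hcon).le⟩
    · rw [Icc_self]
      simp

end Metric

/-! ### Homotopy decomposition of a path into two truncations -/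

section Decomp
variable {X : Type} [TopologicalSpace X]

/-- Splitting a path at time `s` into two truncations, up to homotopy. -/
lemma decomp_homotopic {u w : X} (β : Path u w) {s : ℝ} (h0 : 0 ≤ s) (h1 : s ≤ 1) :
    Path.Homotopic
      (((β.truncateOfLE (show (0:ℝ) ≤ s from h0)).cast β.extend_zero.symm rfl).trans
        ((β.truncateOfLE (show s ≤ (1:ℝ) from h1)).cast rfl β.extend_one.symm)) β := by
  set g : ℝ → ℝ := fun t => if t ≤ 1/2 then min (2*t) s else max (2*t-1) s with hgdef
  have hgmem : ∀ t : unitInterval, g t ∈ unitInterval := by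
    intro t
    have ht0 : (0:ℝ) ≤ t := t.2.1
    have ht1 : (t:ℝ) ≤ 1 := t.2.2
    simp only [hgdef]
    split_ifs with h
    · exact ⟨le_min (by linarith) h0, (min_le_right _ _).trans h1⟩
    · exact ⟨le_trans h0 (le_max_right _ _), max_le (by linarith) h1⟩
  have hgcont : Continuous g := by
    apply Continuous.if_le
    · fun_prop
    · fun_prop
    · exact continuous_id
    · exact continuous_const
    · intro t ht
      rw [ht]
      norm_num
      rw [min_eq_right h1, max_eq_right h0]
  set f : unitInterval → unitInterval := fun t => ⟨g t, hgmem t⟩ with hfdef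
  have hfcont : Continuous f := Continuous.subtype_mk (hgcont.comp continuous_subtype_val) _
  have hf0 : f 0 = 0 := by
    apply Subtype.ext
    show g 0 = 0
    rw [hgdef]
    norm_num [h0]
  have hf1 : f 1 = 1 := by
    apply Subtype.ext
    show g 1 = 1
    rw [hgdef]
    norm_num [h1]
  have heq : (((β.truncateOfLE (show (0:ℝ) ≤ s from h0)).cast β.extend_zero.symm rfl).trans
      ((β.truncateOfLE (show s ≤ (1:ℝ) from h1)).cast rfl β.extend_one.symm))
      = β.reparam f hfcont hf0 hf1 := by
    ext t
    rw [Path.trans_apply]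
    have hrhs : (β.reparam f hfcont hf0 hf1) t = β.extend (g t) := by
      rw [Path.coe_reparam]
      simp only [Function.comp_apply]
      rw [← Path.extend_extends']
    rw [hrhs]
    split_ifs with h
    · show (β.truncateOfLE (show (0:ℝ) ≤ s from h0)) _ = _
      rw [Path.truncateOfLE]
      show β.extend (min (max (2 * (t:ℝ)) 0) s) = β.extend (g t)
      have ht0 : (0:ℝ) ≤ t := t.2.1
      simp only [hgdef]
      rw [if_pos h, max_eq_left (by linarith : (0:ℝ) ≤ 2 * (t:ℝ))]
    · show (β.truncateOfLE (show s ≤ (1:ℝ) from h1)) _ = _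
      rw [Path.truncateOfLE]
      show β.extend (min (max (2 * (t:ℝ) - 1) s) 1) = β.extend (g t)
      have ht1 : (t:ℝ) ≤ 1 := t.2.2
      simp only [hgdef]
      rw [if_neg h, min_eq_left (max_le (by linarith) h1)]
  rw [heq]
  have hh : Path.Homotopic β (β.reparam f hfcont hf0 hf1) :=
    ⟨Path.Homotopy.reparam β f hfcont hf0 hf1⟩
  exact hh.symm

end Decomp

end SmallBallAux

open SmallBallAux

/-- **Lemma (loops in small balls evaluate trivially).**
Let `X` be a compact geodesic metric space, `A` an abelian group and
`φ : π₁(X, x₀) → A` a homomorphism (equivalently, a degree-1 cohomology class of `X`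
with coefficients in `A`).  Let `L(φ)` be the infimum of lengths of rectifiable loops
on which `φ` evaluates non-trivially.  If `2r < L(φ)`, then `φ` evaluates trivially on
every rectifiable loop contained in a metric ball of radius `r`. -/
theorem evalLoop_trivial_of_small_ball {X : Type} [MetricSpace X] [CompactSpace X]
    [PathConnectedSpace X]
    (hgeo : ∀ x y : X, ∃ γ : Path x y, pathLength γ = ENNReal.ofReal (dist x y))
    {A : Type} [CommGroup A] (x₀ : X) (φ : FundamentalGroup X x₀ →* A)
    (L : ℝ≥0∞)
    (hL : L = sInf {ℓ : ℝ≥0∞ | ∃ (y : X) (γ : Path y y) (p : Path x₀ y),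
      evalLoop φ p γ ≠ 1 ∧ pathLength γ = ℓ})
    (r : ℝ) (hr : ENNReal.ofReal (2 * r) < L)
    (x y : X) (γ : Path y y)
    (hball : ∀ t, γ t ∈ Metric.closedBall x r)
    (hrect : pathLength γ ≠ ⊤) :
    ∀ p : Path x₀ y, evalLoop φ p γ = 1 := by
  have hr0 : (0:ℝ) ≤ r := le_trans dist_nonneg (Metric.mem_closedBall.mp (hball 0))
  -- geodesics from the center `x`
  choose geod hgeod using hgeo
  have hlenq : ∀ a : X, a ∈ Metric.closedBall x r →
      pathLength (geod x a) ≤ ENNReal.ofReal r := by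
    intro a ha
    rw [hgeod x a]
    exact ENNReal.ofReal_le_ofReal (by rw [dist_comm]; exact Metric.mem_closedBall.mp ha)
  -- short nontrivial loops do not exist
  have short : ∀ (z : X) (lp : Path z z) (p : Path x₀ z),
      pathLength lp < L → evalLoop φ p lp = 1 := by
    intro z lp p hlt
    by_contra hne
    have : L ≤ pathLength lp := hL ▸ sInf_le ⟨z, lp, p, hne, rfl⟩
    exact absurd hlt (not_lt.mpr this)
  -- pick the step size δ
  obtain ⟨δ', hδ'0, hδ'⟩ := ENNReal.lt_iff_exists_add_pos_lt.mp hr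
  set δ : ℝ≥0∞ := (δ' : ℝ≥0∞) with hδdef
  have hδ0 : δ ≠ 0 := by
    simp [hδdef, hδ'0.ne']
  have hδtop : δ ≠ ⊤ := ENNReal.coe_ne_top
  have hkey : ENNReal.ofReal r + ENNReal.ofReal r = ENNReal.ofReal (2*r) := by
    rw [← ENNReal.ofReal_add hr0 hr0]
    ring_nf
  -- the main induction on the number of pieces of length `δ`
  have main : ∀ n : ℕ, ∀ (u w : X) (β : Path u w), (∀ t, β t ∈ Metric.closedBall x r) →
      pathLength β ≤ (n : ℝ≥0∞) * δ → ∀ p : Path x₀ u,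
      evalLoop φ p (β.trans ((geod x w).symm.trans (geod x u))) = 1 := by
    intro n
    induction n with
    | zero =>
      intro u w β hb hlen p
      have hu : u ∈ Metric.closedBall x r := β.source ▸ hb 0
      have hw : w ∈ Metric.closedBall x r := β.target ▸ hb 1
      apply short
      have h1 : pathLength (β.trans ((geod x w).symm.trans (geod x u))) ≤
          0 + (ENNReal.ofReal r + ENNReal.ofReal r) := by
        rw [pathLength_trans, pathLength_trans, pathLength_symm]
        exact add_le_add (hlen.trans (by simp)) (add_le_add (hlenq w hw) (hlenq u hu))
      calc pathLength (β.trans ((geod x w).symm.trans (geod x u)))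
          ≤ ENNReal.ofReal (2*r) := by rw [← hkey]; simpa using h1
        _ ≤ ENNReal.ofReal (2*r) + δ := le_add_right le_rfl
        _ < L := hδ'
    | succ n ih =>
      intro u w β hb hlen p
      have hu : u ∈ Metric.closedBall x r := β.source ▸ hb 0
      have hw : w ∈ Metric.closedBall x r := β.target ▸ hb 1
      -- split β at a suitable time s
      have hfin : eVariationOn β.extend (Icc 0 1) ≠ ⊤ := by
        rw [← pathLength_eq_extend]
        intro h
        rw [h] at hlen
        exact (ENNReal.mul_ne_top (ENNReal.natCast_ne_top _) hδtop)
          (top_le_iff.mp hlen)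
      have htot : eVariationOn β.extend (Icc 0 1) ≤ δ + (n : ℝ≥0∞) * δ := by
        rw [← pathLength_eq_extend]
        refine hlen.trans (le_of_eq ?_)
        push_cast
        ring
      obtain ⟨s, hs0, hs1, hv1, hv2⟩ := split β.continuous_extend hδtop hfin htot
      set v : X := β.extend s with hvdef
      set β₁ : Path u v := ((β.truncateOfLE (show (0:ℝ) ≤ s from hs0)).cast
        β.extend_zero.symm rfl) with hβ₁def
      set β₂ : Path v w := ((β.truncateOfLE (show s ≤ (1:ℝ) from hs1)).cast
        rfl β.extend_one.symm) with hβ₂def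
      have hlen₁ : pathLength β₁ ≤ δ := by
        rw [hβ₁def, pathLength_cast, pathLength_truncateOfLE β le_rfl hs0 hs1]
        exact hv1
      have hlen₂ : pathLength β₂ ≤ (n : ℝ≥0∞) * δ := by
        rw [hβ₂def, pathLength_cast, pathLength_truncateOfLE β hs0 hs1 le_rfl]
        exact hv2
      have hbrange : range ⇑β ⊆ Metric.closedBall x r := by
        rintro _ ⟨t, rfl⟩
        exact hb t
      have hball₂ : ∀ t, β₂ t ∈ Metric.closedBall x r := by
        intro t
        have ht : β₂ t ∈ range ⇑(β.truncate s 1) := ⟨t, rfl⟩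
        exact hbrange (Path.truncate_range β ht)
      have hball₁ : ∀ t, β₁ t ∈ Metric.closedBall x r := by
        intro t
        have ht : β₁ t ∈ range ⇑(β.truncate 0 s) := ⟨t, rfl⟩
        exact hbrange (Path.truncate_range β ht)
      have hv : v ∈ Metric.closedBall x r := β₂.source ▸ hball₂ 0
      -- the first small loop is short
      have hloop1 : evalLoop φ p (β₁.trans ((geod x v).symm.trans (geod x u))) = 1 := by
        apply short
        calc pathLength (β₁.trans ((geod x v).symm.trans (geod x u)))
            ≤ δ + (ENNReal.ofReal r + ENNReal.ofReal r) := by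
              rw [pathLength_trans, pathLength_trans, pathLength_symm]
              exact add_le_add hlen₁ (add_le_add (hlenq v hv) (hlenq u hu))
          _ = ENNReal.ofReal (2*r) + δ := by rw [hkey, add_comm]
          _ < L := hδ'
      -- the second loop is handled by the induction hypothesis
      have hloop2 : evalLoop φ (p.trans β₁)
          (β₂.trans ((geod x w).symm.trans (geod x v))) = 1 :=
        ih v w β₂ hball₂ hlen₂ (p.trans β₁)
      -- replace β by β₁.trans β₂ up to homotopy
      have hhom : Path.Homotopic
          ((β.trans ((geod x w).symm.trans (geod x u))))
          ((β₁.trans β₂).trans ((geod x w).symm.trans (geod x u))) :=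
        Path.Homotopic.hcomp (decomp_homotopic β hs0 hs1).symm
          (Path.Homotopic.refl _)
      rw [evalLoop_congr φ p hhom]
      -- now pure groupoid algebra
      set P := FundamentalGroupoid.fromPath (X := TopCat.of X) (⟦p⟧ :
        Path.Homotopic.Quotient x₀ u) with hP
      set B₁ := FundamentalGroupoid.fromPath (X := TopCat.of X) (⟦β₁⟧ :
        Path.Homotopic.Quotient u v) with hB₁
      set B₂ := FundamentalGroupoid.fromPath (X := TopCat.of X) (⟦β₂⟧ :
        Path.Homotopic.Quotient v w) with hB₂
      set Qu := FundamentalGroupoid.fromPath (X := TopCat.of X) (⟦geod x u⟧ :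
        Path.Homotopic.Quotient x u) with hQu
      set Qv := FundamentalGroupoid.fromPath (X := TopCat.of X) (⟦geod x v⟧ :
        Path.Homotopic.Quotient x v) with hQv
      set Qw := FundamentalGroupoid.fromPath (X := TopCat.of X) (⟦geod x w⟧ :
        Path.Homotopic.Quotient x w) with hQw
      have harrow : evalLoop φ p ((β₁.trans β₂).trans ((geod x w).symm.trans (geod x u))) =
          theta φ P ((B₁ ≫ B₂) ≫ (Groupoid.inv Qw ≫ Qu)) := rfl
      rw [harrow]
      have hsplit2 : (B₁ ≫ B₂) ≫ (Groupoid.inv Qw ≫ Qu) =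
          (B₁ ≫ (Groupoid.inv Qv ≫ Qu)) ≫
            (((Groupoid.inv Qu ≫ Qv) ≫ (B₂ ≫ (Groupoid.inv Qw ≫ Qv))) ≫
              Groupoid.inv (Groupoid.inv Qu ≫ Qv)) := by
        simp [Groupoid.inv_eq_inv]
      rw [hsplit2, theta_comp, theta_conj]
      have hfac1 : theta φ P (B₁ ≫ (Groupoid.inv Qv ≫ Qu)) = 1 := by
        have : evalLoop φ p (β₁.trans ((geod x v).symm.trans (geod x u))) =
            theta φ P (B₁ ≫ (Groupoid.inv Qv ≫ Qu)) := rfl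
        rw [← this]
        exact hloop1
      have hfac2 : theta φ (P ≫ (Groupoid.inv Qu ≫ Qv))
          (B₂ ≫ (Groupoid.inv Qw ≫ Qv)) = 1 := by
        rw [theta_indep φ _ (FundamentalGroupoid.fromPath (X := TopCat.of X)
          (⟦p.trans β₁⟧ : Path.Homotopic.Quotient x₀ v))]
        have : evalLoop φ (p.trans β₁) (β₂.trans ((geod x w).symm.trans (geod x v))) =
            theta φ (FundamentalGroupoid.fromPath (X := TopCat.of X)
              (⟦p.trans β₁⟧ : Path.Homotopic.Quotient x₀ v))
              (B₂ ≫ (Groupoid.inv Qw ≫ Qv)) := rfl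
        rw [← this]
        exact hloop2
      rw [hfac1, hfac2, mul_one]
  -- choose n large enough and conclude
  intro p
  obtain ⟨n, hn⟩ := ENNReal.exists_nat_gt (r := pathLength γ / δ)
    (by
      intro h
      rw [ENNReal.div_eq_top] at h
      rcases h with ⟨-, h2⟩ | ⟨h1, -⟩
      · exact hδ0 h2
      · exact hrect h1)
  have hlen : pathLength γ ≤ (n : ℝ≥0∞) * δ := by
    rw [← ENNReal.div_le_iff_le_mul (Or.inl hδ0) (Or.inl hδtop)]
    exact hn.le
  have h1 := main n y y γ hball hlen p
  have hT : evalLoop φ p ((geod x y).symm.trans (geod x y)) = 1 := by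
    apply short
    have hy : y ∈ Metric.closedBall x r := γ.source ▸ hball 0
    calc pathLength ((geod x y).symm.trans (geod x y))
        ≤ ENNReal.ofReal r + ENNReal.ofReal r := by
          rw [pathLength_trans, pathLength_symm]
          exact add_le_add (hlenq y hy) (hlenq y hy)
      _ = ENNReal.ofReal (2*r) := hkey
      _ < L := hr
  have hmul : evalLoop φ p (γ.trans ((geod x y).symm.trans (geod x y))) =
      evalLoop φ p γ * evalLoop φ p ((geod x y).symm.trans (geod x y)) := by
    rw [evalLoop_eq_theta, evalLoop_eq_theta, evalLoop_eq_theta]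
    rw [show (FundamentalGroupoid.fromPath (X := TopCat.of X)
      (⟦γ.trans ((geod x y).symm.trans (geod x y))⟧ : Path.Homotopic.Quotient y y)) =
      (FundamentalGroupoid.fromPath (X := TopCat.of X) (⟦γ⟧ : Path.Homotopic.Quotient y y)) ≫
      (FundamentalGroupoid.fromPath (X := TopCat.of X)
        (⟦(geod x y).symm.trans (geod x y)⟧ : Path.Homotopic.Quotient y y)) from rfl]
    rw [theta_comp]
  rw [h1, hT, mul_one] at hmul
  exact hmul.symm
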